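/- Let n ≥ 3 and let L ∈ ℝ^{n×n} be Minkowski-symmetric and null negative semi-definite. Let e₀ = (1,0,…,0) and let x̃ ∈ ℝⁿ satisfy ⟨e₀, x̃⟩ = 0 and ⟨x̃, x̃⟩ = 1, and set x = e₀ + x̃ (so that x is null). Assume ⟨Lx, x⟩ = 0. Then for every vector y ∈ ℝⁿ with ⟨y,y⟩ = 1, ⟨y, e₀⟩ = 0 and ⟨y, x̃⟩ = 0, one has ⟨Lx, y⟩ = 0. -/

import Mathlib

open Matrix Set

noncomputable section

/-- The Minkowski inner product on `ℝⁿ`: `⟨v,w⟩ = -v₀w₀ + Σ_{j≥1} vⱼwⱼ`. -/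
def mink {n : ℕ} (v w : Fin n → ℝ) : ℝ :=
  ∑ j : Fin n, (if (j : ℕ) = 0 then -(v j * w j) else v j * w j)

/-- A vector is null if its Minkowski square vanishes. -/
def IsNull {n : ℕ} (v : Fin n → ℝ) : Prop := mink v v = 0

/-- A matrix is symmetric with respect to the Minkowski inner product. -/
def MinkSymm {n : ℕ} (L : Matrix (Fin n) (Fin n) ℝ) : Prop :=
  ∀ v w : Fin n → ℝ, mink (L.mulVec v) w = mink v (L.mulVec w)

/-- A matrix is null negative-definite: `⟨Lv,v⟩ < 0` for all nonzero null `v`. -/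
def NullNegDef {n : ℕ} (L : Matrix (Fin n) (Fin n) ℝ) : Prop :=
  ∀ v : Fin n → ℝ, v ≠ 0 → IsNull v → mink (L.mulVec v) v < 0

/-- A matrix is null negative semi-definite: `⟨Lv,v⟩ ≤ 0` for all null `v`. -/
def NullNegSemi {n : ℕ} (L : Matrix (Fin n) (Fin n) ℝ) : Prop :=
  ∀ v : Fin n → ℝ, IsNull v → mink (L.mulVec v) v ≤ 0

/-- Entrywise derivative (within a set) of a matrix-valued function of a real variable. -/
def matDerivWithin {n : ℕ} (L : ℝ → Matrix (Fin n) (Fin n) ℝ) (s : Set ℝ) (t : ℝ) :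
    Matrix (Fin n) (Fin n) ℝ :=
  Matrix.of fun i j => derivWithin (fun u => L u i j) s t

lemma mink_comm {n : ℕ} (v w : Fin n → ℝ) : mink v w = mink w v := by
  unfold mink; apply Finset.sum_congr rfl; intro j _; split <;> ring

lemma mink_add_left {n : ℕ} (v w u : Fin n → ℝ) :
    mink (v + w) u = mink v u + mink w u := by
  unfold mink; rw [← Finset.sum_add_distrib]
  apply Finset.sum_congr rfl; intro j _
  by_cases h : (j : ℕ) = 0 <;> simp [h] <;> ring

lemma mink_smul_left {n : ℕ} (a : ℝ) (v u : Fin n → ℝ) :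
    mink (a • v) u = a * mink v u := by
  unfold mink; rw [Finset.mul_sum]
  apply Finset.sum_congr rfl; intro j _
  by_cases h : (j : ℕ) = 0 <;> simp [h] <;> ring

lemma mink_add_right {n : ℕ} (u v w : Fin n → ℝ) :
    mink u (v + w) = mink u v + mink u w := by
  rw [mink_comm, mink_add_left, mink_comm v u, mink_comm w u]

lemma mink_smul_right {n : ℕ} (a : ℝ) (u v : Fin n → ℝ) :
    mink u (a • v) = a * mink u v := by
  rw [mink_comm, mink_smul_left, mink_comm v u]

lemma mink_expand0 {n : ℕ} (u v w : Fin n → ℝ) (a b : ℝ) :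
    mink (u + a • v + b • w) (u + a • v + b • w) =
      mink u u + a^2 * mink v v + b^2 * mink w w
        + 2*a*mink u v + 2*b*mink u w + 2*a*b*mink v w := by
  simp only [mink_add_left, mink_add_right, mink_smul_left, mink_smul_right]
  rw [mink_comm v u, mink_comm w u, mink_comm w v]
  ring

lemma mink_expandL {n : ℕ} (L : Matrix (Fin n) (Fin n) ℝ) (hsymm : MinkSymm L)
    (u v w : Fin n → ℝ) (a b c : ℝ) :
    mink (L.mulVec (a • u + b • v + c • w)) (a • u + b • v + c • w) =
      a^2 * mink (L.mulVec u) u + b^2 * mink (L.mulVec v) v + c^2 * mink (L.mulVec w) w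
        + 2*a*b*mink (L.mulVec u) v + 2*a*c*mink (L.mulVec u) w
        + 2*b*c*mink (L.mulVec v) w := by
  have hsw : ∀ p q : Fin n → ℝ, mink (L.mulVec p) q = mink (L.mulVec q) p := by
    intro p q; rw [hsymm p q, mink_comm]
  simp only [Matrix.mulVec_add, Matrix.mulVec_smul, mink_add_left, mink_add_right,
    mink_smul_left, mink_smul_right]
  rw [hsw v u, hsw w u, hsw w v]
  ring

lemma mink_expand3 {n : ℕ} (u v w : Fin n → ℝ) (a b c : ℝ) :
    mink (a • u + b • v + c • w) (a • u + b • v + c • w) =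
      a^2 * mink u u + b^2 * mink v v + c^2 * mink w w
        + 2*a*b*mink u v + 2*a*c*mink u w + 2*b*c*mink v w := by
  simp only [mink_add_left, mink_add_right, mink_smul_left, mink_smul_right]
  rw [mink_comm v u, mink_comm w u, mink_comm w v]
  ring

lemma poly_coeff_zero (a1 a2 a3 a4 : ℝ)
    (h : ∀ t : ℝ, a1*t + a2*t^2 + a3*t^3 + a4*t^4 ≤ 0) : a1 = 0 := by
  set f : ℝ → ℝ := fun t => a1*t + a2*t^2 + a3*t^3 + a4*t^4 with hf
  have hmax : IsLocalMax f 0 := by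
    apply Filter.Eventually.of_forall
    intro t
    simp [hf]
    nlinarith [h t]
  have hd : HasDerivAt f a1 0 := by
    have h1 : HasDerivAt (fun t : ℝ => a1 * t) (a1 * 1) 0 :=
      (hasDerivAt_id 0).const_mul a1
    have h2 := (hasDerivAt_pow 2 (0:ℝ)).const_mul a2
    have h3 := (hasDerivAt_pow 3 (0:ℝ)).const_mul a3
    have h4 := (hasDerivAt_pow 4 (0:ℝ)).const_mul a4
    have := ((h1.add h2).add h3).add h4
    exact this.congr_deriv (by simp)
  exact hmax.hasDerivAt_eq_zero hd

/-- orthogonality of `Lx` to all unit spacelike vectors Minkowski-orthogonal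
to `e₀` and `x̃`, for `x = e₀ + x̃` null with `⟨Lx,x⟩ = 0`. -/
theorem stmt_2 {n : ℕ} (hn : 3 ≤ n) (L : Matrix (Fin n) (Fin n) ℝ)
    (hsymm : MinkSymm L) (hsemi : NullNegSemi L)
    (e₀ xt : Fin n → ℝ)
    (he₀ : e₀ = fun j => if j.val = 0 then (1 : ℝ) else 0)
    (horth : mink e₀ xt = 0) (hunit : mink xt xt = 1)
    (x : Fin n → ℝ) (hx : x = e₀ + xt)
    (hLx : mink (L.mulVec x) x = 0) :
    ∀ y : Fin n → ℝ, mink y y = 1 → mink y e₀ = 0 → mink y xt = 0 →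
      mink (L.mulVec x) y = 0 := by
  intro y hy1 hye hyx
  -- basic inner products
  have hee : mink e₀ e₀ = -1 := by
    have h0 : 0 < n := by omega
    have hterm : ∀ j : Fin n, (if (j : ℕ) = 0 then -(e₀ j * e₀ j) else e₀ j * e₀ j)
        = if j = ⟨0, h0⟩ then (-1 : ℝ) else 0 := by
      intro j
      subst he₀
      by_cases h : (j : ℕ) = 0 <;> simp [h, Fin.ext_iff]
    unfold mink
    simp [hterm]
  have hey : mink e₀ y = 0 := by rw [mink_comm]; exact hye
  have hxy : mink xt y = 0 := by rw [mink_comm]; exact hyx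
  -- abbreviations
  set A := mink (L.mulVec e₀) e₀ with hA
  set B := mink (L.mulVec xt) xt with hB
  set C := mink (L.mulVec y) y with hC
  set D := mink (L.mulVec e₀) xt with hD
  set E := mink (L.mulVec e₀) y with hE
  set G := mink (L.mulVec xt) y with hG
  -- goal reduces to E + G = 0
  have hgoal : mink (L.mulVec x) y = E + G := by
    rw [hx, Matrix.mulVec_add, mink_add_left]
  -- hLx gives A + B + 2D = 0
  have hABD : A + B + 2*D = 0 := by
    have hx' : x = (1:ℝ) • e₀ + (1:ℝ) • xt + (0:ℝ) • y := by
      rw [hx]; simp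
    rw [hx', mink_expandL L hsymm] at hLx
    nlinarith [hLx]
  -- the family of null vectors
  have hpoly : ∀ t : ℝ,
      (4*E+4*G)*t + (2*A-2*B+4*C)*t^2 + (4*E-4*G)*t^3 + (A+B-2*D)*t^4 ≤ 0 := by
    intro t
    have hnull : IsNull ((1+t^2) • e₀ + (1-t^2) • xt + (2*t) • y) := by
      unfold IsNull
      rw [mink_expand3, hee, hunit, hy1, horth, hey, hxy]
      ring
    have hineq := hsemi _ hnull
    rw [mink_expandL L hsymm] at hineq
    nlinarith [hineq, hABD]
  have := poly_coeff_zero _ _ _ _ hpoly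
  rw [hgoal]
  linarith
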